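/- Let 0 < q < 1 and r ≥ 1. For real x ≥ 0, the (r+1)-st derivative of log G_r(x+1;q) equals (-log q)^{r+1} ∑_{n=1}^{∞} ∑_{k=1}^{∞} C(n+r-2, r-1) k^r q^{(x+n)k}, which is nonnegative. -/

import Mathlib

open Finset Filter Topology

/-- Real generalized binomial coefficient C(x,k) = x(x-1)⋯(x-k+1)/k!. -/
noncomputable def binomR (x : ℝ) (k : ℕ) : ℝ :=
  (∏ i ∈ Finset.range k, (x - i)) / (Nat.factorial k)

/-- Real version of g_r(x,n). -/
noncomputable def qgR (r : ℕ) (x : ℝ) (n : ℕ) : ℝ :=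
  ∑ m ∈ Finset.Icc 1 (r - 1),
    (-1 : ℝ) ^ (m - 1) * binomR x (r - m) * (Nat.choose (n + m - 2) (m - 1))

/-- `logQG q r x = log G_r(x+1; q)`:
`-C(x,r) log(1-q) + ∑_{n≥1} [(-1)^r C(n+r-2,r-1) log((1-q^{x+n})/(1-q^n)) + g_r(x,n) log(1-q^n)]`. -/
noncomputable def logQG (q : ℝ) (r : ℕ) (x : ℝ) : ℝ :=
  -(binomR x r) * Real.log (1 - q) +
    ∑' n : ℕ,
      ((-1 : ℝ) ^ r * (Nat.choose (n + 1 + r - 2) (r - 1)) *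
          Real.log ((1 - q ^ (x + n + 1)) / (1 - q ^ ((n : ℝ) + 1)))
        + qgR r x (n + 1) * Real.log (1 - q ^ ((n : ℝ) + 1)))

noncomputable def Dq (q : ℝ) (r j : ℕ) (p : ℕ × ℕ) (y : ℝ) : ℝ :=
  -((-1:ℝ)^r * (Nat.choose (p.1 + 1 + r - 2) (r-1) : ℝ)) / ((p.2:ℝ)+1) *
    (((p.2:ℝ)+1) * Real.log q)^j *
    Real.exp ((y + p.1 + 1) * ((p.2:ℝ)+1) * Real.log q)

noncomputable def Gq (q : ℝ) (r j : ℕ) (y : ℝ) : ℝ := ∑' p : ℕ × ℕ, Dq q r j p y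

noncomputable def uq (q : ℝ) (r j : ℕ) (p : ℕ × ℕ) : ℝ :=
  (Nat.choose (p.1 + 1 + r - 2) (r-1) : ℝ) * (((p.2:ℝ)+1) * |Real.log q|)^j *
    Real.exp (((p.1:ℝ) + 1/2) * ((p.2:ℝ)+1) * Real.log q)

lemma summable_aux (k : ℕ) {t : ℝ} (ht0 : 0 < t) (ht : t < 1) :
    Summable (fun n : ℕ => ((n:ℝ)+1)^k * t^n) := by
  have h : Summable (fun n : ℕ => (n:ℝ)^k * t^n) := by
    simpa using summable_pow_mul_geometric_of_norm_lt_one k (r := t)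
      (by rw [Real.norm_eq_abs, abs_of_pos ht0]; exact ht)
  have h2 : Summable (fun n : ℕ => ((n:ℝ)+1)^k * t^(n+1)) := by
    have := (summable_nat_add_iff 1).2 h
    apply this.congr
    intro n; push_cast; ring
  have := h2.mul_left t⁻¹
  apply this.congr
  intro n
  field_simp
  ring

lemma choose_bound (r n : ℕ) (hr : 1 ≤ r) :
    (Nat.choose (n + 1 + r - 2) (r-1) : ℝ) ≤ (r:ℝ)^(r-1) * ((n:ℝ)+1)^(r-1) := by
  have h1 : Nat.choose (n + 1 + r - 2) (r-1) ≤ (n + 1 + r - 2)^(r-1) := Nat.choose_le_pow _ _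
  have h2 : (n + 1 + r - 2)^(r-1) ≤ (r * (n+1))^(r-1) := by
    apply Nat.pow_le_pow_left
    have : n + r ≤ r * (n+1) := by nlinarith
    omega
  calc (Nat.choose (n + 1 + r - 2) (r-1) : ℝ) ≤ ((r * (n+1))^(r-1) : ℕ) := by
        exact_mod_cast le_trans h1 h2
    _ = ((r:ℝ) * ((n:ℝ)+1))^(r-1) := by push_cast; ring
    _ = (r:ℝ)^(r-1) * ((n:ℝ)+1)^(r-1) := mul_pow _ _ _

lemma summable_uq {q : ℝ} (hq : 0 < q) (hq1 : q < 1) {r : ℕ} (hr : 1 ≤ r) (j : ℕ) :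
    Summable (uq q r j) := by
  set L := Real.log q with hLdef
  have hL : L < 0 := Real.log_neg hq hq1
  -- bound : uq ≤ a n * b k
  set a : ℕ → ℝ := fun n => (r:ℝ)^(r-1) * ((n:ℝ)+1)^(r-1) * Real.exp ((n:ℝ) * L) with ha
  set b : ℕ → ℝ := fun k => (((k:ℝ)+1) * |L|)^j * Real.exp (((k:ℝ)+1) * (L/2)) with hb
  have hsa : Summable a := by
    have : Summable (fun n : ℕ => ((n:ℝ)+1)^(r-1) * (Real.exp L)^n) :=
      summable_aux _ (Real.exp_pos L) (by rw [Real.exp_lt_one_iff]; exact hL)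
    apply (this.mul_left ((r:ℝ)^(r-1))).congr
    intro n
    rw [← Real.exp_nat_mul]
    ring
  have hsb : Summable b := by
    have h0 : (0:ℝ) < Real.exp (L/2) := Real.exp_pos _
    have h1 : Real.exp (L/2) < 1 := by rw [Real.exp_lt_one_iff]; linarith
    have : Summable (fun k : ℕ => ((k:ℝ)+1)^j * (Real.exp (L/2))^k) := summable_aux _ h0 h1
    apply ((this.mul_left (|L|^j * Real.exp (L/2)))).congr
    intro k
    simp only [hb]
    rw [mul_pow, show ((k:ℝ)+1)*(L/2) = (k:ℝ)*(L/2) + L/2 from by ring,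
      Real.exp_add, Real.exp_nat_mul]
    ring
  have hprod : Summable (fun p : ℕ × ℕ => a p.1 * b p.2) := by
    apply hsa.mul_of_nonneg hsb
    · intro n; positivity
    · intro k; positivity
  apply Summable.of_nonneg_of_le _ _ hprod
  · intro p; unfold uq; positivity
  · intro p
    obtain ⟨n, k⟩ := p
    show (Nat.choose (n + 1 + r - 2) (r-1) : ℝ) * (((k:ℝ)+1) * |L|)^j *
      Real.exp (((n:ℝ) + 1/2) * ((k:ℝ)+1) * L) ≤ a n * b k
    have hc := choose_bound r n hr
    have hexp : Real.exp (((n:ℝ) + 1/2) * ((k:ℝ)+1) * L) ≤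
        Real.exp ((n:ℝ) * L) * Real.exp (((k:ℝ)+1) * (L/2)) := by
      rw [← Real.exp_add, Real.exp_le_exp]
      nlinarith [mul_nonneg (mul_nonneg (show (0:ℝ) ≤ n from Nat.cast_nonneg n) (show (0:ℝ) ≤ k from Nat.cast_nonneg k)) (show (0:ℝ) ≤ -L from by linarith)]
    calc (Nat.choose (n + 1 + r - 2) (r-1) : ℝ) * (((k:ℝ)+1) * |L|)^j *
          Real.exp (((n:ℝ) + 1/2) * ((k:ℝ)+1) * L)
        ≤ ((r:ℝ)^(r-1) * ((n:ℝ)+1)^(r-1)) * (((k:ℝ)+1) * |L|)^j *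
          (Real.exp ((n:ℝ) * L) * Real.exp (((k:ℝ)+1) * (L/2))) := by
          apply mul_le_mul
          · apply mul_le_mul_of_nonneg_right hc; positivity
          · exact hexp
          · positivity
          · positivity
    _ = a n * b k := by rw [ha, hb]; ring

lemma Dq_bound {q : ℝ} (hq : 0 < q) (hq1 : q < 1) (r j : ℕ) (p : ℕ × ℕ) {y : ℝ}
    (hy : y ∈ Set.Ioi (-(1/2) : ℝ)) : ‖Dq q r j p y‖ ≤ uq q r j p := by
  obtain ⟨n, k⟩ := p
  have hL : Real.log q < 0 := Real.log_neg hq hq1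
  have hy' : -(1/2:ℝ) < y := hy
  set L := Real.log q
  set C : ℝ := (Nat.choose (n + 1 + r - 2) (r-1) : ℝ)
  have hC : 0 ≤ C := Nat.cast_nonneg _
  have hk1 : (1:ℝ) ≤ (k:ℝ) + 1 := by
    have := (Nat.cast_nonneg k : (0:ℝ) ≤ k); linarith
  have habs : ‖Dq q r j (n,k) y‖ =
      C / ((k:ℝ)+1) * (((k:ℝ)+1) * |L|)^j * Real.exp ((y + n + 1) * ((k:ℝ)+1) * L) := by
    show |(-((-1:ℝ)^r * C) / ((k:ℝ)+1) * (((k:ℝ)+1) * L)^j *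
      Real.exp ((y + n + 1) * ((k:ℝ)+1) * L))| = _
    simp [abs_mul, abs_div, abs_pow, abs_neg, abs_one, abs_of_nonneg hC,
      abs_of_nonneg (Real.exp_pos ((y + ↑n + 1) * ((k:ℝ)+1) * L)).le,
      abs_of_nonneg (show (0:ℝ) ≤ (k:ℝ)+1 from by positivity)]
  rw [habs]
  have hexp : Real.exp ((y + n + 1) * ((k:ℝ)+1) * L) ≤
      Real.exp (((n:ℝ) + 1/2) * ((k:ℝ)+1) * L) := by
    rw [Real.exp_le_exp]
    have h1 : ((n:ℝ) + 1/2) ≤ y + n + 1 := by linarith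
    nlinarith [mul_nonneg (show (0:ℝ) ≤ ((y + n +1) - ((n:ℝ)+1/2)) from by linarith)
      (show (0:ℝ) ≤ ((k:ℝ)+1) * (-L) from mul_nonneg (by positivity) (by linarith))]
  have hdiv : C / ((k:ℝ)+1) ≤ C := by
    rw [div_le_iff₀ (by positivity)]
    nlinarith
  calc C / ((k:ℝ)+1) * (((k:ℝ)+1) * |L|)^j * Real.exp ((y + n + 1) * ((k:ℝ)+1) * L)
      ≤ C * (((k:ℝ)+1) * |L|)^j * Real.exp (((n:ℝ) + 1/2) * ((k:ℝ)+1) * L) := by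
        apply mul_le_mul
        · apply mul_le_mul_of_nonneg_right hdiv; positivity
        · exact hexp
        · positivity
        · positivity
    _ = uq q r j (n,k) := rfl

lemma Dq_hasDerivAt (q : ℝ) (r j : ℕ) (p : ℕ × ℕ) (y : ℝ) :
    HasDerivAt (fun z => Dq q r j p z) (Dq q r (j+1) p y) y := by
  set L := Real.log q
  set c0 : ℝ := -((-1:ℝ)^r * (Nat.choose (p.1 + 1 + r - 2) (r-1) : ℝ)) / ((p.2:ℝ)+1)
  have h1 : HasDerivAt (fun z : ℝ => (z + (p.1:ℝ) + 1) * (((p.2:ℝ)+1) * L))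
      (((p.2:ℝ)+1) * L) y := by
    simpa using (((hasDerivAt_id y).add_const ((p.1:ℝ))).add_const 1).mul_const
      (((p.2:ℝ)+1) * L)
  have h2 := (Real.hasDerivAt_exp _).comp y h1
  have h3 := h2.const_mul (c0 * (((p.2:ℝ)+1) * L)^j)
  have e1 : (fun z => Dq q r j p z) = (fun y => c0 * (((p.2:ℝ)+1) * L)^j *
      (Real.exp ∘ fun z => (z + (p.1:ℝ) + 1) * (((p.2:ℝ)+1) * L)) y) := by
    funext z
    show c0 * (((p.2:ℝ)+1) * L)^j * Real.exp ((z + ↑p.1 + 1) * ((p.2:ℝ)+1) * L) = _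
    rw [mul_assoc (z + (p.1:ℝ) + 1)]
    simp [Function.comp]
  have e2 : Dq q r (j+1) p y = c0 * (((p.2:ℝ)+1) * L)^j *
      (Real.exp ((y + (p.1:ℝ) + 1) * (((p.2:ℝ)+1) * L)) * (((p.2:ℝ)+1) * L)) := by
    show c0 * (((p.2:ℝ)+1) * L)^(j+1) * Real.exp ((y + ↑p.1 + 1) * ((p.2:ℝ)+1) * L) = _
    rw [mul_assoc (y + (p.1:ℝ) + 1), pow_succ]
    ring
  rw [e1, e2]
  exact h3

lemma Dq_summable_at {q : ℝ} (hq : 0 < q) (hq1 : q < 1) {r : ℕ} (hr : 1 ≤ r) (j : ℕ)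
    {y : ℝ} (hy : y ∈ Set.Ioi (-(1/2) : ℝ)) : Summable (fun p => Dq q r j p y) :=
  (summable_uq hq hq1 hr j).of_norm_bounded fun p => Dq_bound hq hq1 r j p hy

lemma Gq_hasDerivAt {q : ℝ} (hq : 0 < q) (hq1 : q < 1) {r : ℕ} (hr : 1 ≤ r) (j : ℕ)
    {y : ℝ} (hy : y ∈ Set.Ioi (-(1/2) : ℝ)) :
    HasDerivAt (Gq q r j) (Gq q r (j+1) y) y := by
  apply hasDerivAt_tsum_of_isPreconnected (summable_uq hq hq1 hr (j+1)) isOpen_Ioi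
    isPreconnected_Ioi (fun p z hz => Dq_hasDerivAt q r j p z)
    (fun p z hz => Dq_bound hq hq1 r (j+1) p hz)
    (show (0:ℝ) ∈ Set.Ioi (-(1/2):ℝ) by norm_num)
    (Dq_summable_at hq hq1 hr j (by norm_num)) hy

noncomputable def pbq (k : ℕ) : Polynomial ℝ :=
  (∏ i ∈ Finset.range k, (Polynomial.X - Polynomial.C (i:ℝ))) * Polynomial.C ((k.factorial : ℝ))⁻¹

lemma pbq_eval (k : ℕ) (y : ℝ) : (pbq k).eval y = binomR y k := by
  unfold pbq binomR
  rw [Polynomial.eval_mul, Polynomial.eval_prod, Polynomial.eval_C, div_eq_mul_inv]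
  congr 1
  apply Finset.prod_congr rfl
  intro i _
  simp

lemma pbq_natDegree (k : ℕ) : (pbq k).natDegree ≤ k := by
  unfold pbq
  refine le_trans (Polynomial.natDegree_mul_le) ?_
  rw [Polynomial.natDegree_C, add_zero]
  refine le_trans (Polynomial.natDegree_prod_le _ _) ?_
  calc ∑ i ∈ Finset.range k, (Polynomial.X - Polynomial.C (i:ℝ)).natDegree
      ≤ ∑ _i ∈ Finset.range k, 1 := by
        apply Finset.sum_le_sum
        intro i _
        exact le_of_eq (Polynomial.natDegree_X_sub_C _)
    _ = k := by simp

noncomputable def Aq (q : ℝ) (r : ℕ) : ℝ :=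
  ∑' n : ℕ, -((-1:ℝ)^r * (Nat.choose (n + 1 + r - 2) (r-1) : ℝ)) * Real.log (1 - q^((n:ℝ)+1))

noncomputable def Bq (q : ℝ) (m : ℕ) : ℝ :=
  ∑' n : ℕ, (Nat.choose (n + 1 + m - 2) (m-1) : ℝ) * Real.log (1 - q^((n:ℝ)+1))

noncomputable def QPq (q : ℝ) (r : ℕ) : Polynomial ℝ :=
  Polynomial.C (-(Real.log (1-q))) * pbq r + Polynomial.C (Aq q r)
  + ∑ m ∈ Finset.Icc 1 (r-1), Polynomial.C ((-1:ℝ)^(m-1) * Bq q m) * pbq (r-m)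

lemma QPq_natDegree (q : ℝ) (r : ℕ) : (QPq q r).natDegree ≤ r := by
  unfold QPq
  refine le_trans (Polynomial.natDegree_add_le _ _) (max_le (le_trans (Polynomial.natDegree_add_le _ _) (max_le ?_ ?_)) ?_)
  · exact le_trans Polynomial.natDegree_mul_le
      (by simpa [Polynomial.natDegree_C] using pbq_natDegree r)
  · simp [Polynomial.natDegree_C]
  · apply Polynomial.natDegree_sum_le_of_forall_le
    intro m _
    refine le_trans Polynomial.natDegree_mul_le ?_
    rw [Polynomial.natDegree_C, zero_add]
    exact le_trans (pbq_natDegree (r-m)) (Nat.sub_le r m)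

lemma rpow_mem {q : ℝ} (hq : 0 < q) (hq1 : q < 1) {t : ℝ} (ht : 0 < t) :
    0 < q ^ t ∧ q ^ t < 1 :=
  ⟨Real.rpow_pos_of_pos hq t, Real.rpow_lt_one hq.le hq1 ht⟩

lemma abs_log_one_sub_le {t c : ℝ} (h0 : 0 ≤ t) (htc : t ≤ c) (hc : c < 1) :
    |Real.log (1-t)| ≤ t / (1-c) := by
  have ht1 : t < 1 := lt_of_le_of_lt htc hc
  have h1t : 0 < 1 - t := by linarith
  have hlogle : Real.log (1-t) ≤ 0 := Real.log_nonpos (by linarith) (by linarith)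
  rw [abs_of_nonpos hlogle]
  have := Real.log_le_sub_one_of_pos (show (0:ℝ) < (1-t)⁻¹ by positivity)
  rw [Real.log_inv] at this
  have h2 : (1-t)⁻¹ - 1 = t / (1-t) := by field_simp; ring
  have h3 : t / (1-t) ≤ t / (1-c) := by
    apply div_le_div_of_nonneg_left h0 (by linarith) (by linarith)
  linarith [this, h2 ▸ this]

lemma rpow_succ_le {q : ℝ} (hq : 0 < q) (hq1 : q < 1) (n : ℕ) :
    q ^ ((n:ℝ)+1) ≤ q := by
  have := Real.rpow_le_rpow_of_exponent_ge hq hq1.le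
    (show (1:ℝ) ≤ (n:ℝ)+1 by have := (Nat.cast_nonneg n : (0:ℝ) ≤ n); linarith)
  simpa using this

lemma summable_choose_log {q : ℝ} (hq : 0 < q) (hq1 : q < 1) (s d : ℕ) (hs : 1 ≤ s) :
    Summable (fun n : ℕ => (Nat.choose (n + 1 + s - 2) (s-1) : ℝ) *
      Real.log (1 - q^((n:ℝ)+1))) := by
  have hbase : Summable (fun n : ℕ => ((n:ℝ)+1)^(s-1) * q^n) := summable_aux _ hq hq1
  refine Summable.of_norm_bounded (hbase.mul_left (((s:ℝ)^(s-1) * (q/(1-q))))) ?_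
  intro n
  have hq1' : 0 < 1 - q := by linarith
  have hmem := rpow_mem hq hq1 (show (0:ℝ) < (n:ℝ)+1 by positivity)
  have hlog : |Real.log (1 - q^((n:ℝ)+1))| ≤ q^((n:ℝ)+1) / (1-q) :=
    abs_log_one_sub_le hmem.1.le (rpow_succ_le hq hq1 n) hq1
  have hrn : q^((n:ℝ)+1) = q * q^n := by
    rw [show ((n:ℝ)+1) = ((n+1 : ℕ) : ℝ) by push_cast; ring, Real.rpow_natCast, pow_succ]
    ring
  rw [Real.norm_eq_abs, abs_mul, abs_of_nonneg (Nat.cast_nonneg _ : (0:ℝ) ≤ _)]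
  calc (Nat.choose (n + 1 + s - 2) (s-1) : ℝ) * |Real.log (1 - q^((n:ℝ)+1))|
      ≤ ((s:ℝ)^(s-1) * ((n:ℝ)+1)^(s-1)) * (q^((n:ℝ)+1) / (1-q)) := by
        apply mul_le_mul (choose_bound s n hs) hlog (abs_nonneg _) (by positivity)
    _ = ((s:ℝ)^(s-1) * (q/(1-q))) * (((n:ℝ)+1)^(s-1) * q^n) := by
        rw [hrn]; ring

lemma S1_eq {q : ℝ} (hq : 0 < q) (hq1 : q < 1) (r : ℕ) {y : ℝ}
    (hy' : -(1/2:ℝ) < y) (n : ℕ) :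
    (-1:ℝ)^r * (Nat.choose (n+1+r-2) (r-1):ℝ) * Real.log (1 - q^(y+(n:ℝ)+1))
      = ∑' k : ℕ, Dq q r 0 (n,k) y := by
  set L := Real.log q with hL
  set γ : ℝ := (-1:ℝ)^r * (Nat.choose (n+1+r-2) (r-1):ℝ) with hγ
  have hyn : (0:ℝ) < y + (n:ℝ) + 1 := by
    have := (Nat.cast_nonneg n : (0:ℝ) ≤ n); linarith
  set t := q ^ (y+(n:ℝ)+1) with htdef
  have ht : 0 < t ∧ t < 1 := rpow_mem hq hq1 hyn
  have hs := Real.hasSum_pow_div_log_of_abs_lt_one (x := t)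
    (by rw [abs_of_pos ht.1]; exact ht.2)
  have htk : ∀ k : ℕ, t^(k+1) = Real.exp ((y+(n:ℝ)+1) * ((k:ℝ)+1) * L) := by
    intro k
    rw [show t = Real.exp (L * (y+(n:ℝ)+1)) from Real.rpow_def_of_pos hq _,
      ← Real.exp_nat_mul]
    congr 1
    push_cast
    ring
  calc γ * Real.log (1-t) = -γ * -Real.log (1-t) := by ring
    _ = ∑' k : ℕ, -γ * (t^(k+1)/((k:ℝ)+1)) := ((hs.mul_left (-γ)).tsum_eq).symm
    _ = ∑' k : ℕ, Dq q r 0 (n,k) y := by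
        apply tsum_congr
        intro k
        show -γ * (t^(k+1)/((k:ℝ)+1)) = -γ/((k:ℝ)+1) * (((k:ℝ)+1)*L)^0 *
          Real.exp ((y+(n:ℝ)+1) * ((k:ℝ)+1) * L)
        rw [pow_zero, htk k]
        ring

lemma summable_S1 {q : ℝ} (hq : 0 < q) (hq1 : q < 1) {r : ℕ} (hr : 1 ≤ r) {y : ℝ}
    (hy : y ∈ Set.Ioi (-(1/2):ℝ)) :
    Summable (fun n : ℕ => (-1:ℝ)^r * (Nat.choose (n+1+r-2) (r-1):ℝ) *
      Real.log (1 - q^(y+(n:ℝ)+1))) := by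
  have hsum := Dq_summable_at hq hq1 hr 0 hy
  exact hsum.prod.congr fun n => (S1_eq hq hq1 r hy n).symm

lemma tsum_S1 {q : ℝ} (hq : 0 < q) (hq1 : q < 1) {r : ℕ} (hr : 1 ≤ r) {y : ℝ}
    (hy : y ∈ Set.Ioi (-(1/2):ℝ)) :
    ∑' n : ℕ, ((-1:ℝ)^r * (Nat.choose (n+1+r-2) (r-1):ℝ) *
      Real.log (1 - q^(y+(n:ℝ)+1))) = Gq q r 0 y := by
  have hsum := Dq_summable_at hq hq1 hr 0 hy
  rw [Gq, Summable.tsum_prod hsum]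
  exact tsum_congr fun n => S1_eq hq hq1 r hy n

lemma logQG_eq {q : ℝ} (hq : 0 < q) (hq1 : q < 1) {r : ℕ} (hr : 1 ≤ r) {y : ℝ}
    (hy : y ∈ Set.Ioi (-(1/2):ℝ)) :
    logQG q r y = (QPq q r).eval y + Gq q r 0 y := by
  have hy' : -(1/2:ℝ) < y := hy
  have hq1' : (0:ℝ) < 1 - q := by linarith
  set S1 : ℕ → ℝ := fun n => (-1:ℝ)^r * (Nat.choose (n+1+r-2) (r-1):ℝ) *
    Real.log (1 - q^(y+(n:ℝ)+1)) with hS1def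
  set S2 : ℕ → ℝ := fun n => -((-1:ℝ)^r * (Nat.choose (n+1+r-2) (r-1):ℝ)) *
    Real.log (1 - q^((n:ℝ)+1)) with hS2def
  set S3 : ℕ → ℝ := fun n => qgR r y (n+1) * Real.log (1 - q^((n:ℝ)+1)) with hS3def
  have hS1 : Summable S1 := summable_S1 hq hq1 hr hy
  have hS2 : Summable S2 := by
    apply ((summable_choose_log hq hq1 r 0 hr).mul_left (-(-1:ℝ)^r)).congr
    intro n
    simp only [hS2def]
    ring
  have hsum3 : ∀ m ∈ Finset.Icc 1 (r-1),
      Summable (fun n : ℕ => ((-1:ℝ)^(m-1) * binomR y (r-m)) *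
        ((Nat.choose (n+1+m-2) (m-1):ℝ) * Real.log (1 - q^((n:ℝ)+1)))) := by
    intro m hm
    have hm1 : 1 ≤ m := (Finset.mem_Icc.1 hm).1
    exact (summable_choose_log hq hq1 m 0 hm1).mul_left _
  have hS3 : Summable S3 := by
    apply (summable_sum (s := Finset.Icc 1 (r-1)) hsum3).congr
    intro n
    simp only [hS3def, qgR]
    rw [Finset.sum_mul]
    apply Finset.sum_congr rfl
    intro m _
    ring
  -- rewrite each term of the tsum in logQG
  have hterm : ∀ n : ℕ,
      ((-1 : ℝ) ^ r * (Nat.choose (n + 1 + r - 2) (r - 1)) *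
          Real.log ((1 - q ^ (y + n + 1)) / (1 - q ^ ((n : ℝ) + 1)))
        + qgR r y (n + 1) * Real.log (1 - q ^ ((n : ℝ) + 1)))
      = S1 n + (S2 n + S3 n) := by
    intro n
    have hyn : (0:ℝ) < y + (n:ℝ) + 1 := by
      have := (Nat.cast_nonneg n : (0:ℝ) ≤ n); linarith
    have hn1 : (0:ℝ) < (n:ℝ) + 1 := by positivity
    have h1 := rpow_mem hq hq1 hyn
    have h2 := rpow_mem hq hq1 hn1
    rw [Real.log_div (by linarith [h1.2]) (by linarith [h2.2])]
    simp only [hS1def, hS2def, hS3def]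
    ring
  have hsplit : ∑' n : ℕ,
      ((-1 : ℝ) ^ r * (Nat.choose (n + 1 + r - 2) (r - 1)) *
          Real.log ((1 - q ^ (y + n + 1)) / (1 - q ^ ((n : ℝ) + 1)))
        + qgR r y (n + 1) * Real.log (1 - q ^ ((n : ℝ) + 1)))
      = (∑' n, S1 n) + ((∑' n, S2 n) + (∑' n, S3 n)) := by
    rw [← Summable.tsum_add hS2 hS3, ← Summable.tsum_add hS1 (hS2.add hS3)]
    exact tsum_congr hterm
  have h1 : ∑' n, S1 n = Gq q r 0 y := tsum_S1 hq hq1 hr hy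
  have h2 : ∑' n, S2 n = Aq q r := rfl
  have h3 : ∑' n, S3 n = ∑ m ∈ Finset.Icc 1 (r-1),
      ((-1:ℝ)^(m-1) * binomR y (r-m)) * Bq q m := by
    have hswap : ∑' n : ℕ, S3 n = ∑' n : ℕ, ∑ m ∈ Finset.Icc 1 (r-1),
        ((-1:ℝ)^(m-1) * binomR y (r-m)) *
          ((Nat.choose (n+1+m-2) (m-1):ℝ) * Real.log (1 - q^((n:ℝ)+1))) := by
      apply tsum_congr
      intro n
      simp only [hS3def, qgR]
      rw [Finset.sum_mul]
      apply Finset.sum_congr rfl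
      intro m _
      ring
    rw [hswap, Summable.tsum_finsetSum hsum3]
    apply Finset.sum_congr rfl
    intro m _
    rw [tsum_mul_left]
    rfl
  have heval : (QPq q r).eval y = -(Real.log (1-q)) * binomR y r + Aq q r
      + ∑ m ∈ Finset.Icc 1 (r-1), ((-1:ℝ)^(m-1) * Bq q m) * binomR y (r-m) := by
    unfold QPq
    rw [Polynomial.eval_add, Polynomial.eval_add, Polynomial.eval_mul,
      Polynomial.eval_C, Polynomial.eval_C, pbq_eval, Polynomial.eval_finset_sum]
    congr 1
    apply Finset.sum_congr rfl
    intro m _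
    rw [Polynomial.eval_mul, Polynomial.eval_C, pbq_eval]
  rw [logQG, hsplit, h1, h2, h3, heval]
  have : ∑ m ∈ Finset.Icc 1 (r-1), ((-1:ℝ)^(m-1) * binomR y (r-m)) * Bq q m
      = ∑ m ∈ Finset.Icc 1 (r-1), ((-1:ℝ)^(m-1) * Bq q m) * binomR y (r-m) := by
    apply Finset.sum_congr rfl
    intro m _
    ring
  rw [this]
  ring

lemma iter_eq {q : ℝ} (hq : 0 < q) (hq1 : q < 1) {r : ℕ} (hr : 1 ≤ r) (j : ℕ) :
    ∀ y ∈ Set.Ioi (-(1/2):ℝ),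
    iteratedDeriv j (logQG q r) y
      = (Polynomial.derivative^[j] (QPq q r)).eval y + Gq q r j y := by
  induction j with
  | zero =>
    intro y hy
    simpa [iteratedDeriv_zero] using logQG_eq hq hq1 hr hy
  | succ j ih =>
    intro y hy
    rw [iteratedDeriv_succ]
    have hev : iteratedDeriv j (logQG q r) =ᶠ[𝓝 y]
        fun z => (Polynomial.derivative^[j] (QPq q r)).eval z + Gq q r j z := by
      filter_upwards [isOpen_Ioi.mem_nhds hy] with z hz using ih z hz
    rw [hev.deriv_eq]
    have hd : HasDerivAt
        (fun z => (Polynomial.derivative^[j] (QPq q r)).eval z + Gq q r j z)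
        ((Polynomial.derivative^[j+1] (QPq q r)).eval y + Gq q r (j+1) y) y := by
      rw [Function.iterate_succ_apply']
      exact (Polynomial.hasDerivAt _ y).add (Gq_hasDerivAt hq hq1 hr j hy)
    exact hd.deriv

theorem stmt8 (q : ℝ) (hq : 0 < q) (hq1 : q < 1) (r : ℕ) (hr : 1 ≤ r) (x : ℝ) (hx : 0 ≤ x) :
    iteratedDeriv (r + 1) (logQG q r) x
        = (-Real.log q) ^ (r + 1) *
            ∑' n : ℕ, ∑' k : ℕ,
              (Nat.choose (n + 1 + r - 2) (r - 1) : ℝ) * ((k : ℝ) + 1) ^ r *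
                q ^ ((x + n + 1) * (k + 1))
      ∧ 0 ≤ iteratedDeriv (r + 1) (logQG q r) x := by
  set L := Real.log q with hLdef
  have hL : L < 0 := Real.log_neg hq hq1
  have hx2 : x ∈ Set.Ioi (-(1/2):ℝ) := by
    simp only [Set.mem_Ioi]; linarith
  have h := iter_eq hq hq1 hr (r+1) x hx2
  have hP0 : Polynomial.derivative^[r+1] (QPq q r) = 0 :=
    Polynomial.iterate_derivative_eq_zero
      (lt_of_le_of_lt (QPq_natDegree q r) (Nat.lt_succ_self r))
  rw [hP0] at h
  simp only [Polynomial.eval_zero, zero_add] at h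
  set F : ℕ × ℕ → ℝ := fun p =>
    (Nat.choose (p.1 + 1 + r - 2) (r-1) : ℝ) * ((p.2:ℝ)+1)^r *
      q ^ ((x + p.1 + 1) * ((p.2:ℝ)+1)) with hFdef
  have hD : ∀ p : ℕ × ℕ, Dq q r (r+1) p x = (-L)^(r+1) * F p := by
    intro p
    have hk : ((p.2:ℝ)+1) ≠ 0 := by positivity
    show -((-1:ℝ)^r * (Nat.choose (p.1 + 1 + r - 2) (r-1) : ℝ)) / ((p.2:ℝ)+1) *
        (((p.2:ℝ)+1) * L)^(r+1) * Real.exp ((x + p.1 + 1) * ((p.2:ℝ)+1) * L) = _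
    simp only [hFdef]
    rw [Real.rpow_def_of_pos hq,
      show L * ((x + (p.1:ℝ) + 1) * ((p.2:ℝ)+1)) = (x + (p.1:ℝ) + 1) * ((p.2:ℝ)+1) * L
        from by ring]
    rw [mul_pow, pow_succ ((p.2:ℝ)+1), neg_pow]
    field_simp
    ring
  have hDsum := Dq_summable_at hq hq1 hr (r+1) hx2
  have hFsum : Summable F := by
    have hc : (-L)^(r+1) ≠ 0 := pow_ne_zero _ (by linarith)
    apply (hDsum.mul_left ((-L)^(r+1))⁻¹).congr
    intro p
    rw [hD p]
    field_simp
  have hG : Gq q r (r+1) x = (-L)^(r+1) *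
      ∑' n : ℕ, ∑' k : ℕ,
        (Nat.choose (n + 1 + r - 2) (r - 1) : ℝ) * ((k : ℝ) + 1) ^ r *
          q ^ ((x + n + 1) * ((k:ℝ) + 1)) := by
    rw [Gq, tsum_congr hD, tsum_mul_left, Summable.tsum_prod hFsum]
  constructor
  · rw [h, hG]
  · rw [h, hG]
    apply mul_nonneg (pow_nonneg (by linarith) _)
    apply tsum_nonneg
    intro n
    apply tsum_nonneg
    intro k
    have h1 : (0:ℝ) ≤ (Nat.choose (n + 1 + r - 2) (r - 1) : ℝ) := Nat.cast_nonneg _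
    have h2 : (0:ℝ) ≤ ((k:ℝ)+1)^r := by positivity
    have h3 : (0:ℝ) ≤ q ^ ((x + n + 1) * ((k:ℝ) + 1)) := Real.rpow_nonneg hq.le _
    positivity
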